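/- Let G be a convex N-function with derivative g extended oddly to ℝ, satisfying b·g(b) ≥ p⁻·G(b) for all b > 0. Then for all a < 0 < b, G(|b−a|/2) ≤ (1/(2p⁻))·(g(b)−g(a))·(b−a). -/
import Mathlib


/-- Second case of the Lindqvist-type inequality:
for `a < 0 < b`, `G(|b−a|/2) ≤ (1/(2p⁻))(g(b)−g(a))(b−a)`. -/
theorem stmt4 (g G : ℝ → ℝ) (pm : ℝ)
    (hpm : 1 < pm)
    (hG0 : G 0 = 0)
    (hGconv : ConvexOn ℝ (Set.Ici 0) G)
    (hderiv : ∀ t > 0, HasDerivAt G (g t) t)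
    (hmono : Monotone g)
    (hodd : ∀ x, g (-x) = -g x)
    (hgrowth : ∀ b > 0, pm * G b ≤ b * g b) :
    ∀ a b : ℝ, a < 0 → 0 < b →
      G (|b - a| / 2) ≤ (1 / (2 * pm)) * (g b - g a) * (b - a) := by
  intro a b ha hb
  have hpm0 : (0:ℝ) < pm := lt_trans one_pos hpm
  have hg0 : g 0 = 0 := by have := hodd 0; simp at this; linarith
  have hgb : 0 ≤ g b := by rw [← hg0]; exact hmono hb.le
  have hga : g a ≤ 0 := by rw [← hg0]; exact hmono ha.le
  have habs : |b - a| = b - a := abs_of_pos (by linarith)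
  rw [habs]
  -- convexity
  have hconv := hGconv.2 (Set.mem_Ici.mpr hb.le) (Set.mem_Ici.mpr (by linarith : (0:ℝ) ≤ -a))
      (by norm_num : (0:ℝ) ≤ (1:ℝ)/2) (by norm_num : (0:ℝ) ≤ (1:ℝ)/2) (by norm_num)
  simp only [smul_eq_mul] at hconv
  have h1 : G ((b - a) / 2) ≤ (G b + G (-a)) / 2 := by
    have e : 1 / 2 * b + 1 / 2 * (-a) = (b - a) / 2 := by ring
    rw [e] at hconv
    linarith
  have h2 : pm * G b ≤ b * g b := hgrowth b hb
  have h3 : pm * G (-a) ≤ (-a) * g (-a) := hgrowth (-a) (by linarith)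
  rw [hodd a] at h3
  have key : b * g b + (-a) * (-g a) ≤ (g b - g a) * (b - a) := by
    nlinarith [mul_nonneg (by linarith : (0:ℝ) ≤ -a) hgb, mul_nonneg hb.le (by linarith : (0:ℝ) ≤ -g a)]
  have h4 : (G b + G (-a)) / 2 ≤ ((g b - g a) * (b - a)) / (2 * pm) := by
    rw [div_le_div_iff₀ two_pos (by linarith)]
    nlinarith
  calc G ((b - a) / 2) ≤ (G b + G (-a)) / 2 := h1
  _ ≤ ((g b - g a) * (b - a)) / (2 * pm) := h4
  _ = (1 / (2 * pm)) * (g b - g a) * (b - a) := by ring
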